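/- Suppose Assumptions A, B and C-2 hold and let (x^r, y^r) be generated by HiBSA (concave case) with γ^r > 0 and β^r > L_{x_i} for all r and i. Then for every r ≥ 1 (where y^r is itself produced by the regularized y-update with parameter γ^{r−1} from (x^r, y^{r−1})), ℓ(x^{r+1}, y^{r+1}) − ℓ(x^r, y^r) ≤ (1/(2ρ))‖y^r − y^{r−1}‖² − (β^r/2 + μ − ρL_y²/2)‖x^{r+1} − x^r‖² − (γ^{r−1}/2 − 1/ρ)‖y^{r+1} − y^r‖² + (γ^r/2)‖y^{r+1}‖² − (γ^{r−1}/2)‖y^r‖² + ((γ^{r−1} − γ^r)/2)‖y^{r+1}‖², where μ := min_{i} μ_i. -/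

import Mathlib

open scoped RealInnerProductSpace

/-- The `i`-th block space `ℝ^N`. -/
abbrev Blk (N : ℕ) : Type := EuclideanSpace ℝ (Fin N)

/-- The full `x`-space `ℝ^{NK}`, with the Euclidean (ℓ²) product norm. -/
abbrev XVec (N K : ℕ) : Type := PiLp 2 (fun _ : Fin K => Blk N)

/-- The `y`-space `ℝ^M`. -/
abbrev YVec (M : ℕ) : Type := EuclideanSpace ℝ (Fin M)

/-- `hibsaW xs r i = w_i^{r+1} = (x_1^{r+1},…,x_{i−1}^{r+1}, x_i^r,…,x_K^r)`. -/
noncomputable def hibsaW {N K : ℕ} (xs : ℕ → XVec N K) (r : ℕ) (i : Fin K) : XVec N K :=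
  WithLp.toLp 2 (fun j : Fin K => if (j : ℕ) < (i : ℕ) then xs (r + 1) j else xs r j)

/-- Replace the `i`-th block of `x` by `z`. -/
noncomputable def blockUpdate {N K : ℕ} (x : XVec N K) (i : Fin K) (z : Blk N) : XVec N K :=
  WithLp.toLp 2 (Function.update x i z)


section HibsaAux

open scoped RealInnerProductSpace

private lemma aux_lim {A B C : ℝ} (h : ∀ t ∈ Set.Ioc (0:ℝ) 1, A ≤ B + t * C) : A ≤ B := by
  have hmem : Set.Ioc (0:ℝ) 1 ∈ nhdsWithin (0:ℝ) (Set.Ioi 0) :=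
    Ioc_mem_nhdsGT_of_mem ⟨le_refl 0, zero_lt_one⟩
  have htend : Filter.Tendsto (fun t : ℝ => B + t * C) (nhdsWithin 0 (Set.Ioi 0)) (nhds B) := by
    have h1 : Filter.Tendsto (fun t : ℝ => B + t * C) (nhds 0) (nhds (B + 0 * C)) :=
      (Continuous.tendsto (by continuity) 0)
    simpa using h1.mono_left nhdsWithin_le_nhds
  exact ge_of_tendsto htend (Filter.mem_of_superset hmem (fun t ht => h t ht))

private lemma aux_young {ρ a b : ℝ} (hρ : 0 < ρ) : a * b ≤ ρ/2 * a^2 + 1/(2*ρ) * b^2 := by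
  have h2 : (0:ℝ) < 2*ρ := by linarith
  calc a*b = (2*ρ*(a*b))/(2*ρ) := by field_simp
    _ ≤ (ρ^2*a^2 + b^2)/(2*ρ) :=
        div_le_div_of_nonneg_right (by nlinarith [sq_nonneg (ρ*a-b)]) h2.le
    _ = ρ/2*a^2 + 1/(2*ρ)*b^2 := by field_simp

private lemma aux_young' {ρ s a b : ℝ} (hρ : 0 < ρ) (h : s ≤ a*b) :
    1/ρ * s ≤ 1/(2*ρ)*a^2 + 1/(2*ρ)*b^2 := by
  have h2 : (0:ℝ) < 2*ρ := by linarith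
  have key : 2*s ≤ a^2+b^2 := by nlinarith [sq_nonneg (a-b)]
  calc 1/ρ*s = (2*s)/(2*ρ) := by field_simp
    _ ≤ (a^2+b^2)/(2*ρ) := div_le_div_of_nonneg_right key h2.le
    _ = 1/(2*ρ)*a^2 + 1/(2*ρ)*b^2 := by ring

private lemma inner_diff_identity {E : Type*} [NormedAddCommGroup E] [InnerProductSpace ℝ E]
    (a b : E) : 2 * ⟪a, b - a⟫ = ‖b‖^2 - ‖a‖^2 - ‖b - a‖^2 := by
  have h1 := norm_sub_sq_real b a
  have h2 : ⟪a, b - a⟫ = ⟪a, b⟫ - ‖a‖^2 := by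
    rw [inner_sub_right, real_inner_self_eq_norm_sq]
  have h3 : ⟪a, b⟫ = ⟪b, a⟫ := real_inner_comm b a
  linarith

private lemma norm_add_smul_sq {E : Type*} [NormedAddCommGroup E] [InnerProductSpace ℝ E]
    (v d : E) (t : ℝ) : ‖v + t • d‖^2 = ‖v‖^2 + 2*t*⟪v, d⟫ + t^2*‖d‖^2 := by
  rw [norm_add_sq_real, real_inner_smul_right, norm_smul, Real.norm_eq_abs, mul_pow, sq_abs]
  ring

private lemma aux_slope_le {ψ : ℝ → ℝ} {D B C : ℝ}
    (hψ : HasDerivAt ψ D 0)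
    (h : ∀ t ∈ Set.Ioc (0:ℝ) 1, ψ t - ψ 0 ≤ t * (B + t * C)) : D ≤ B := by
  have hslope := (hasDerivAt_iff_tendsto_slope.mp hψ).mono_left
    (nhdsWithin_mono 0 (fun x (hx : x ∈ Set.Ioi (0:ℝ)) => ne_of_gt hx))
  have htendB : Filter.Tendsto (fun t : ℝ => B + t * C) (nhdsWithin 0 (Set.Ioi 0)) (nhds B) := by
    have h1 : Filter.Tendsto (fun t : ℝ => B + t * C) (nhds 0) (nhds (B + 0 * C)) :=
      (Continuous.tendsto (by continuity) 0)
    simpa using h1.mono_left nhdsWithin_le_nhds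
  apply le_of_tendsto_of_tendsto hslope htendB
  filter_upwards [Ioc_mem_nhdsGT_of_mem (Set.mem_Ico.mpr ⟨le_refl 0, zero_lt_one⟩)] with t ht
  have hlt := h t ht
  show slope ψ 0 t ≤ B + t * C
  rw [slope_def_field, sub_zero, div_le_iff₀ ht.1]
  nlinarith [hlt]

private lemma strong_min {E : Type*} [NormedAddCommGroup E] [InnerProductSpace ℝ E]
    (UU hh : E → ℝ) (GUU : E → E) (S : Set E) (hSconv : Convex ℝ S)
    (hhcv : ConvexOn ℝ Set.univ hh) (μi β : ℝ)
    (hB1 : ∀ z ∈ S, ∀ z' ∈ S, ⟪GUU z', z - z'⟫ + μi/2 * ‖z - z'‖^2 ≤ UU z - UU z')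
    (a b : E) (ha : a ∈ S) (hb : b ∈ S)
    (hmin : ∀ z ∈ S, UU b + hh b + β/2 * ‖b - a‖^2 ≤ UU z + hh z + β/2 * ‖z - a‖^2) :
    UU b + hh b ≤ UU a + hh a - (β + μi/2) * ‖b - a‖^2 := by
  apply aux_lim (C := (μi + β)/2 * ‖b - a‖^2)
  intro t ht
  obtain ⟨ht0, ht1⟩ := ht
  have humem : t • a + (1-t) • b ∈ S := hSconv ha hb ht0.le (by linarith) (by ring)
  have hmin' := hmin _ humem
  have h1 := hB1 a ha _ humem
  have h2 := hB1 b hb _ humem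
  have hna : ‖t • a + (1-t) • b - a‖^2 = (1-t)^2 * ‖b - a‖^2 := by
    rw [show t • a + (1-t) • b - a = (1-t) • (b - a) by module, norm_smul, Real.norm_eq_abs,
      mul_pow, sq_abs]
  have hna' : ‖a - (t • a + (1-t) • b)‖^2 = (1-t)^2 * ‖b - a‖^2 := by
    rw [norm_sub_rev]; exact hna
  have hnb : ‖b - (t • a + (1-t) • b)‖^2 = t^2 * ‖b - a‖^2 := by
    rw [show b - (t • a + (1-t) • b) = t • (b - a) by module, norm_smul, Real.norm_eq_abs,
      mul_pow, sq_abs]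
  have hi1 : ⟪GUU (t • a + (1-t) • b), a - (t • a + (1-t) • b)⟫
      = -((1-t) * ⟪GUU (t • a + (1-t) • b), b - a⟫) := by
    rw [show a - (t • a + (1-t) • b) = (-(1-t)) • (b - a) by module, real_inner_smul_right]
    ring
  have hi2 : ⟪GUU (t • a + (1-t) • b), b - (t • a + (1-t) • b)⟫
      = t * ⟪GUU (t • a + (1-t) • b), b - a⟫ := by
    rw [show b - (t • a + (1-t) • b) = t • (b - a) by module, real_inner_smul_right]
  rw [hi1, hna'] at h1
  rw [hi2, hnb] at h2
  rw [hna] at hmin'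
  have hcv := hhcv.2 (Set.mem_univ a) (Set.mem_univ b) ht0.le
    (by linarith : (0:ℝ) ≤ 1-t) (by ring)
  simp only [smul_eq_mul] at hcv
  have hmul1 := mul_le_mul_of_nonneg_left h1 ht0.le
  have hmul2 := mul_le_mul_of_nonneg_left h2 (by linarith : (0:ℝ) ≤ 1-t)
  have hgoal : t * (UU b + hh b)
      ≤ t * ((UU a + hh a - (β + μi/2) * ‖b - a‖^2) + t * ((μi + β)/2 * ‖b - a‖^2)) := by
    nlinarith [hmin', hcv, hmul1, hmul2]
  exact le_of_mul_le_mul_left hgoal ht0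

private lemma descent_ineq {N K M : ℕ} (f : XVec N K → YVec M → ℝ)
    (Xi : Fin K → Set (Blk N)) (hXiconv : ∀ i, Convex ℝ (Xi i))
    (Y : Set (YVec M))
    (Gfx : XVec N K → YVec M → XVec N K)
    (hGfx : ∀ x y, HasGradientAt (fun z => f z y) (Gfx x y) x)
    (Lx : Fin K → ℝ)
    (hLx : ∀ (i : Fin K) (y : YVec M), y ∈ Y → ∀ x x' : XVec N K,
      (∀ j, x j ∈ Xi j) → (∀ j, x' j ∈ Xi j) →
      ‖Gfx x' y i - Gfx x y i‖ ≤ Lx i * ‖x' - x‖)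
    (i : Fin K) (w : XVec N K) (hw : ∀ j, w j ∈ Xi j)
    (y : YVec M) (hy : y ∈ Y) (b : Blk N) (hb : b ∈ Xi i) :
    f (blockUpdate w i b) y
      ≤ f w y + ⟪Gfx w y i, b - w i⟫ + Lx i / 2 * ‖b - w i‖ ^ 2 := by
  classical
  set Δ : Blk N := b - w i with hΔ
  set e : XVec N K := WithLp.toLp 2 (Function.update (0 : XVec N K) i Δ) with he
  have he_apply : ∀ j, e j = if j = i then Δ else 0 := by
    intro j
    rw [he, PiLp.toLp_apply, Function.update_apply]
    split <;> simp
  have henormsq : ‖e‖^2 = ‖Δ‖^2 := by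
    rw [PiLp.norm_sq_eq_of_L2]
    rw [Finset.sum_eq_single i]
    · rw [he_apply]; simp
    · intro j _ hj; rw [he_apply]; simp [hj]
    · intro hni; exact absurd (Finset.mem_univ i) hni
  have henorm : ‖e‖ = ‖Δ‖ := by
    have := congrArg Real.sqrt henormsq
    rwa [Real.sqrt_sq (norm_nonneg _), Real.sqrt_sq (norm_nonneg _)] at this
  have hinner_e : ∀ v : XVec N K, ⟪v, e⟫ = ⟪v i, Δ⟫ := by
    intro v
    rw [PiLp.inner_apply, Finset.sum_eq_single i]
    · rw [he_apply]; simp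
    · intro j _ hj; rw [he_apply]; simp [hj]
    · intro hni; exact absurd (Finset.mem_univ i) hni
  have hpmem : ∀ t : ℝ, t ∈ Set.Icc (0:ℝ) 1 → ∀ j, (w + t • e) j ∈ Xi j := by
    intro t ht j
    by_cases hj : j = i
    · subst hj
      have hlin : (w + t • e) j = (1-t) • w j + t • b := by
        have h1 : (w + t • e) j = w j + t • Δ := by
          rw [PiLp.add_apply, PiLp.smul_apply, he_apply]; simp
        rw [h1, hΔ]; module
      rw [hlin]
      exact hXiconv j (hw j) hb (by linarith [ht.1, ht.2]) ht.1 (by ring)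
    · have hlin : (w + t • e) j = w j := by
        rw [PiLp.add_apply, PiLp.smul_apply, he_apply]; simp [hj]
      rw [hlin]; exact hw j
  have hp0 : w + (0:ℝ) • e = w := by simp
  have hp1 : w + (1:ℝ) • e = blockUpdate w i b := by
    ext j : 1
    by_cases hj : j = i
    · subst hj
      show w j + (1:ℝ) • e j = Function.update w j b j
      rw [he_apply, Function.update_self]
      simp [hΔ]
    · show w j + (1:ℝ) • e j = Function.update w i b j
      rw [he_apply, Function.update_of_ne hj]
      simp [hj]
  have hderiv : ∀ t : ℝ, HasDerivAt (fun s : ℝ => f (w + s • e) y) ⟪Gfx (w + t • e) y, e⟫ t := by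
    intro t
    have hpath := ((hasDerivAt_id t).smul_const e).const_add w
    have hgrad := (hGfx (w + t • e) y).hasFDerivAt
    have hcomp := hgrad.comp_hasDerivAt t hpath
    simp at hcomp
    exact hcomp
  set A := ⟪Gfx w y i, Δ⟫ with hA
  set c := ‖Δ‖^2 with hc
  set H : ℝ → ℝ := fun s => f (w + s • e) y - s * A - s^2 * (Lx i/2*c) with hHdef
  have hH : ∀ t : ℝ, HasDerivAt H (⟪Gfx (w + t • e) y, e⟫ - A - 2*t*(Lx i/2*c)) t := by
    intro t
    have h1 : HasDerivAt (fun s : ℝ => s * A) A t := by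
      simpa using (hasDerivAt_id t).mul_const A
    have h2 : HasDerivAt (fun s : ℝ => s^2 * (Lx i/2*c)) (2*t*(Lx i/2*c)) t := by
      have h2' := (hasDerivAt_pow 2 t).mul_const (Lx i/2*c)
      norm_num at h2'
      convert h2' using 1 <;> ring_nf
    exact ((hderiv t).sub h1).sub h2
  have hmono : AntitoneOn H (Set.Icc 0 1) := by
    apply antitoneOn_of_deriv_nonpos (convex_Icc 0 1)
    · exact (Differentiable.continuous (fun t => (hH t).differentiableAt)).continuousOn
    · exact fun t _ => (hH t).differentiableAt.differentiableWithinAt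
    · intro t ht
      rw [interior_Icc] at ht
      rw [(hH t).deriv]
      have h1 : ⟪Gfx (w + t • e) y, e⟫ = ⟪Gfx (w + t • e) y i, Δ⟫ := hinner_e _
      have h3 : ⟪Gfx (w + t • e) y i - Gfx w y i, Δ⟫
          ≤ ‖Gfx (w + t • e) y i - Gfx w y i‖ * ‖Δ‖ := real_inner_le_norm _ _
      have h4 : ‖Gfx (w + t • e) y i - Gfx w y i‖ ≤ Lx i * ‖(w + t • e) - w‖ :=
        hLx i y hy w (w + t • e) hw (hpmem t ⟨ht.1.le, ht.2.le⟩)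
      have h5 : ‖(w + t • e) - w‖ = t * ‖Δ‖ := by
        have h5a : (w + t • e) - w = t • e := by module
        rw [h5a, norm_smul, henorm, Real.norm_eq_abs, abs_of_pos ht.1]
      rw [h5] at h4
      have h6 : ‖Gfx (w + t • e) y i - Gfx w y i‖ * ‖Δ‖ ≤ (Lx i * (t * ‖Δ‖)) * ‖Δ‖ :=
        mul_le_mul_of_nonneg_right h4 (norm_nonneg _)
      have h7 : ⟪Gfx (w + t • e) y i, Δ⟫ - A = ⟪Gfx (w + t • e) y i - Gfx w y i, Δ⟫ := by
        rw [inner_sub_left]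
      have h8 : ⟪Gfx (w + t • e) y, e⟫ - A ≤ Lx i * (t * ‖Δ‖) * ‖Δ‖ := by
        rw [h1]; linarith [h3, h6, h7]
      rw [hc]
      nlinarith [h8]
  have hfin := hmono (Set.left_mem_Icc.mpr zero_le_one) (Set.right_mem_Icc.mpr zero_le_one)
    zero_le_one
  have hH1 : H 1 = f (blockUpdate w i b) y - A - Lx i/2*c := by
    show f (w + (1:ℝ) • e) y - 1*A - 1^2*(Lx i/2*c) = _
    rw [hp1]; ring
  have hH0 : H 0 = f w y := by
    show f (w + (0:ℝ) • e) y - 0*A - 0^2*(Lx i/2*c) = _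
    rw [hp0]; ring
  rw [hH1, hH0] at hfin
  have hfc : Lx i / 2 * ‖b - w i‖^2 = Lx i/2*c := by rw [hc]
  linarith [hfin]

private lemma vi_lemma {E : Type*} [NormedAddCommGroup E] [InnerProductSpace ℝ E]
    [CompleteSpace E] (φ : E → ℝ) (Gφ : E) (g : E → ℝ) (hgconv : ConvexOn ℝ Set.univ g)
    (Y : Set E) (hYconv : Convex ℝ Y)
    (ρ γ' : ℝ) (hρ : 0 < ρ)
    (ym y0 u : E) (hy0 : y0 ∈ Y) (hu : u ∈ Y)
    (hgrad : HasGradientAt φ Gφ y0)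
    (hopt : ∀ v ∈ Y, φ v - g v - 1/(2*ρ) * ‖v - ym‖^2 - γ'/2 * ‖v‖^2
      ≤ φ y0 - g y0 - 1/(2*ρ) * ‖y0 - ym‖^2 - γ'/2 * ‖y0‖^2) :
    ⟪Gφ, u - y0⟫ ≤ (g u - g y0) + 1/ρ * ⟪y0 - ym, u - y0⟫ + γ' * ⟪y0, u - y0⟫ := by
  set d := u - y0 with hd
  have hψ : HasDerivAt (fun t : ℝ => φ (y0 + t • d)) ⟪Gφ, d⟫ 0 := by
    have hpath : HasDerivAt (fun s : ℝ => y0 + s • d) d 0 := by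
      simpa using ((hasDerivAt_id (0:ℝ)).smul_const d).const_add y0
    have hfd := hgrad.hasFDerivAt
    have h0 : y0 + (0:ℝ) • d = y0 := by simp
    rw [← h0] at hfd
    exact hfd.comp_hasDerivAt 0 hpath
  apply aux_slope_le (C := (1/(2*ρ) + γ'/2) * ‖d‖^2) hψ
  intro t ht
  simp only [zero_smul, add_zero]
  have hut : y0 + t • d ∈ Y := by
    have he : y0 + t • d = (1-t) • y0 + t • u := by rw [hd]; module
    rw [he]
    exact hYconv hy0 hu (by linarith [ht.1, ht.2]) ht.1.le (by ring)
  have hopt' := hopt (y0 + t • d) hut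
  have hq1 : ‖(y0 + t • d) - ym‖^2 = ‖y0 - ym‖^2 + 2*t*⟪y0 - ym, d⟫ + t^2*‖d‖^2 := by
    rw [show (y0 + t • d) - ym = (y0 - ym) + t • d by module, norm_add_smul_sq]
  have hq2 : ‖y0 + t • d‖^2 = ‖y0‖^2 + 2*t*⟪y0, d⟫ + t^2*‖d‖^2 := norm_add_smul_sq y0 d t
  have hgcv : g (y0 + t • d) ≤ (1-t) * g y0 + t * g u := by
    have he : y0 + t • d = (1-t) • y0 + t • u := by rw [hd]; module
    rw [he]
    have hcv := hgconv.2 (Set.mem_univ y0) (Set.mem_univ u) (by linarith [ht.1, ht.2] : (0:ℝ) ≤ 1-t) ht.1.le (by ring)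
    simpa only [smul_eq_mul] using hcv
  rw [hq1, hq2] at hopt'
  rw [show (1:ℝ)/(2*ρ) = (1/ρ)/2 by ring] at hopt' ⊢
  nlinarith [hopt', hgcv]

/-- The partial update vector: first `k` blocks from `xs (r+1)`, the rest from `xs r`. -/
noncomputable def hibsaV {N K : ℕ} (xs : ℕ → XVec N K) (r k : ℕ) : XVec N K :=
  WithLp.toLp 2 (fun j : Fin K => if (j : ℕ) < k then xs (r + 1) j else xs r j)

end HibsaAux

/-- **Lemma 4 (descent lemma, concave case)** for HiBSA: under Assumptions A, B and C-2,
with `γ^r > 0` and `β^r > L_{xᵢ}`, for every `r ≥ 1`,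
`ℓ(x^{r+1}, y^{r+1}) − ℓ(x^r, y^r) ≤ (1/(2ρ))‖y^r − y^{r−1}‖²
 − (β^r/2 + μ − ρL_y²/2)‖x^{r+1} − x^r‖² − (γ^{r−1}/2 − 1/ρ)‖y^{r+1} − y^r‖²
 + (γ^r/2)‖y^{r+1}‖² − (γ^{r−1}/2)‖y^r‖² + ((γ^{r−1} − γ^r)/2)‖y^{r+1}‖²`,
where `μ = minᵢ μᵢ`. -/
theorem hibsa_descent_concave
    {N K M : ℕ} [NeZero K]
    -- Assumption A
    (f : XVec N K → YVec M → ℝ)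
    (Xi : Fin K → Set (Blk N)) (hXiconv : ∀ i, Convex ℝ (Xi i))
    (hXicomp : ∀ i, IsCompact (Xi i))
    (Y : Set (YVec M)) (hYconv : Convex ℝ Y) (hYcomp : IsCompact Y)
    (h : Fin K → Blk N → ℝ) (hhconv : ∀ i, ConvexOn ℝ Set.univ (h i))
    (g : YVec M → ℝ) (hgconv : ConvexOn ℝ Set.univ g)
    (Gfx : XVec N K → YVec M → XVec N K)
    (hGfx : ∀ x y, HasGradientAt (fun z => f z y) (Gfx x y) x)
    (Gfy : XVec N K → YVec M → YVec M)
    (hGfy : ∀ x y, HasGradientAt (fun z => f x z) (Gfy x y) y)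
    (Lx : Fin K → ℝ)
    (hLx : ∀ (i : Fin K) (y : YVec M), y ∈ Y → ∀ x x' : XVec N K,
      (∀ j, x j ∈ Xi j) → (∀ j, x' j ∈ Xi j) →
      ‖Gfx x' y i - Gfx x y i‖ ≤ Lx i * ‖x' - x‖)
    (Ly : ℝ)
    (hLy : ∀ (x x' : XVec N K) (y y' : YVec M),
      (∀ j, x j ∈ Xi j) → (∀ j, x' j ∈ Xi j) → y ∈ Y → y' ∈ Y →
      ‖Gfy x' y' - Gfy x y‖ ≤ Ly * Real.sqrt (‖x' - x‖ ^ 2 + ‖y' - y‖ ^ 2))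
    -- Assumption B
    (U : Fin K → Blk N → XVec N K → YVec M → ℝ)
    (GU : Fin K → Blk N → XVec N K → YVec M → Blk N)
    (hGU : ∀ i z w y, HasGradientAt (fun u => U i u w y) (GU i z w y) z)
    (μ : Fin K → ℝ) (hμpos : ∀ i, 0 < μ i)
    (μmin : ℝ) (hμmin : μmin = ⨅ i, μ i)
    (hB1 : ∀ (i : Fin K) (w : XVec N K) (y : YVec M), y ∈ Y →
      ∀ z z' : Blk N, z ∈ Xi i → z' ∈ Xi i →
      ⟪GU i z' w y, z - z'⟫ + μ i / 2 * ‖z - z'‖ ^ 2 ≤ U i z w y - U i z' w y)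
    (hB2 : ∀ (i : Fin K) (x : XVec N K) (y : YVec M),
      (∀ j, x j ∈ Xi j) → y ∈ Y → GU i (x i) x y = Gfx x y i)
    (hB3 : ∀ (i : Fin K) (x : XVec N K) (y : YVec M),
      (∀ j, x j ∈ Xi j) → y ∈ Y →
      (∀ z ∈ Xi i, f (blockUpdate x i z) y ≤ U i z x y) ∧ U i (x i) x y = f x y)
    (Lu : Fin K → ℝ)
    (hB4 : ∀ (i : Fin K) (w : XVec N K) (y : YVec M) (z z' : Blk N),
      ‖GU i z w y - GU i z' w y‖ ≤ Lu i * ‖z - z'‖)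
    -- Assumption C-2 (concavity in y)
    (hC2 : ∀ (x : XVec N K) (y z : YVec M), (∀ j, x j ∈ Xi j) → z ∈ Y → y ∈ Y →
      f x y - f x z ≤ ⟪Gfy x z, y - z⟫)
    -- HiBSA iterates (concave case: exact regularized y-update)
    (ρ : ℝ) (hρ : 0 < ρ)
    (βs γ : ℕ → ℝ) (hγpos : ∀ r, 0 < γ r) (hβLx : ∀ (r : ℕ) (i : Fin K), Lx i < βs r)
    (xs : ℕ → XVec N K) (ys : ℕ → YVec M)
    (hx0 : ∀ j, xs 0 j ∈ Xi j) (hy0 : ys 0 ∈ Y)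
    (hxup : ∀ (r : ℕ) (i : Fin K),
      xs (r + 1) i ∈ Xi i ∧
      ∀ z ∈ Xi i,
        U i (xs (r + 1) i) (hibsaW xs r i) (ys r) + h i (xs (r + 1) i)
            + βs r / 2 * ‖xs (r + 1) i - xs r i‖ ^ 2
          ≤ U i z (hibsaW xs r i) (ys r) + h i z + βs r / 2 * ‖z - xs r i‖ ^ 2)
    (hyup : ∀ r : ℕ,
      ys (r + 1) ∈ Y ∧
      ∀ u ∈ Y,
        f (xs (r + 1)) u - g u - 1 / (2 * ρ) * ‖u - ys r‖ ^ 2 - γ r / 2 * ‖u‖ ^ 2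
          ≤ f (xs (r + 1)) (ys (r + 1)) - g (ys (r + 1))
              - 1 / (2 * ρ) * ‖ys (r + 1) - ys r‖ ^ 2 - γ r / 2 * ‖ys (r + 1)‖ ^ 2) :
    -- conclusion: descent estimate
    ∀ r : ℕ, 1 ≤ r →
      (f (xs (r + 1)) (ys (r + 1)) + ∑ i, h i (xs (r + 1) i) - g (ys (r + 1)))
          - (f (xs r) (ys r) + ∑ i, h i (xs r i) - g (ys r))
        ≤ 1 / (2 * ρ) * ‖ys r - ys (r - 1)‖ ^ 2
            - (βs r / 2 + μmin - ρ * Ly ^ 2 / 2) * ‖xs (r + 1) - xs r‖ ^ 2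
            - (γ (r - 1) / 2 - 1 / ρ) * ‖ys (r + 1) - ys r‖ ^ 2
            + γ r / 2 * ‖ys (r + 1)‖ ^ 2 - γ (r - 1) / 2 * ‖ys r‖ ^ 2
            + (γ (r - 1) - γ r) / 2 * ‖ys (r + 1)‖ ^ 2 := by
  classical
  have hxmem : ∀ r j, xs r j ∈ Xi j := by
    intro r
    induction r with
    | zero => exact hx0
    | succ n _ => exact fun j => (hxup n j).1
  have hymem : ∀ r, ys r ∈ Y := by
    intro r
    cases r with
    | zero => exact hy0
    | succ n => exact (hyup n).1
  have hwmem : ∀ r (i : Fin K) j, hibsaW xs r i j ∈ Xi j := by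
    intro r i j
    show (if (j:ℕ) < (i:ℕ) then xs (r+1) j else xs r j) ∈ Xi j
    split
    · exact hxmem (r+1) j
    · exact hxmem r j
  have hμle : ∀ i, μmin ≤ μ i := by
    intro i
    rw [hμmin]
    exact ciInf_le (Finite.bddBelow_range _) i
  have hsplit : ∀ x x' : XVec N K, ‖x' - x‖^2 = ∑ j, ‖x' j - x j‖^2 := by
    intro x x'
    rw [PiLp.norm_sq_eq_of_L2]
    exact Finset.sum_congr rfl fun j _ => by rw [PiLp.sub_apply]
  intro r hr
  obtain ⟨r', rfl⟩ : ∃ r'', r = r'' + 1 := ⟨r - 1, (Nat.succ_pred_eq_of_pos hr).symm⟩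
  simp only [Nat.add_sub_cancel]
  have hyR : ys (r'+1) ∈ Y := hymem (r'+1)
  have hyR1 : ys (r'+1+1) ∈ Y := hymem (r'+1+1)
  -- ============ x-part ============
  have hV0 : hibsaV xs (r'+1) 0 = xs (r'+1) := by
    ext j : 1; exact if_neg (t := xs (r'+1+1) j) (Nat.not_lt_zero (j:ℕ))
  have hVK : hibsaV xs (r'+1) K = xs (r'+1+1) := by
    ext j : 1; exact if_pos j.isLt
  have hVW : ∀ i : Fin K, hibsaV xs (r'+1) (i:ℕ) = hibsaW xs (r'+1) i := fun i => rfl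
  have hVsucc : ∀ i : Fin K,
      hibsaV xs (r'+1) ((i:ℕ)+1) = blockUpdate (hibsaW xs (r'+1) i) i (xs (r'+1+1) i) := by
    intro i
    ext j : 1
    show (if (j:ℕ) < (i:ℕ)+1 then xs (r'+1+1) j else xs (r'+1) j)
      = Function.update (hibsaW xs (r'+1) i) i (xs (r'+1+1) i) j
    rw [Function.update_apply]
    by_cases hj : j = i
    · subst hj
      rw [if_pos rfl, if_pos (Nat.lt_succ_self _)]
    · rw [if_neg hj]
      show _ = (if (j:ℕ) < (i:ℕ) then xs (r'+1+1) j else xs (r'+1) j)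
      have hne : (j:ℕ) ≠ (i:ℕ) := fun hv => hj (Fin.ext hv)
      by_cases hlt : (j:ℕ) < (i:ℕ)
      · rw [if_pos hlt, if_pos (by omega)]
      · rw [if_neg hlt, if_neg (by omega)]
  have hblock : ∀ i : Fin K,
      f (hibsaV xs (r'+1) ((i:ℕ)+1)) (ys (r'+1)) + h i (xs (r'+1+1) i)
        - f (hibsaV xs (r'+1) (i:ℕ)) (ys (r'+1)) - h i (xs (r'+1) i)
        ≤ -(βs (r'+1) / 2 + μmin) * ‖xs (r'+1+1) i - xs (r'+1) i‖^2 := by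
    intro i
    have hw' : ∀ j, hibsaW xs (r'+1) i j ∈ Xi j := hwmem (r'+1) i
    have hwi : hibsaW xs (r'+1) i i = xs (r'+1) i := by
      show (if (i:ℕ) < (i:ℕ) then _ else _) = _
      rw [if_neg (lt_irrefl _)]
    have hstrong := strong_min (fun z => U i z (hibsaW xs (r'+1) i) (ys (r'+1))) (h i)
      (fun z => GU i z (hibsaW xs (r'+1) i) (ys (r'+1))) (Xi i) (hXiconv i) (hhconv i)
      (μ i) (βs (r'+1))
      (fun z hz z' hz' => hB1 i (hibsaW xs (r'+1) i) (ys (r'+1)) hyR z z' hz hz')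
      (xs (r'+1) i) (xs (r'+1+1) i) (hxmem (r'+1) i) (hxmem (r'+1+1) i)
      (fun z hz => (hxup (r'+1) i).2 z hz)
    have hgap : f (blockUpdate (hibsaW xs (r'+1) i) i (xs (r'+1+1) i)) (ys (r'+1))
        ≤ U i (xs (r'+1+1) i) (hibsaW xs (r'+1) i) (ys (r'+1))
          - (μ i - Lx i)/2 * ‖xs (r'+1+1) i - xs (r'+1) i‖^2 := by
      have hd := descent_ineq f Xi hXiconv Y Gfx hGfx Lx hLx i (hibsaW xs (r'+1) i) hw'
        (ys (r'+1)) hyR (xs (r'+1+1) i) (hxmem (r'+1+1) i)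
      rw [hwi] at hd
      have h1 := hB1 i (hibsaW xs (r'+1) i) (ys (r'+1)) hyR (xs (r'+1+1) i) (xs (r'+1) i)
        (hxmem (r'+1+1) i) (hxmem (r'+1) i)
      have htight := (hB3 i (hibsaW xs (r'+1) i) (ys (r'+1)) hw' hyR).2
      have hgc := hB2 i (hibsaW xs (r'+1) i) (ys (r'+1)) hw' hyR
      rw [hwi] at htight hgc
      rw [hgc] at h1
      linarith [hd, h1, htight]
    rw [hVsucc i, hVW i]
    have htight := (hB3 i (hibsaW xs (r'+1) i) (ys (r'+1)) hw' hyR).2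
    rw [hwi] at htight
    have hco : (0:ℝ) ≤ (βs (r'+1) - Lx i)/2 + (μ i - μmin) := by
      linarith [hβLx (r'+1) i, hμle i]
    have hc0 : (0:ℝ) ≤ ‖xs (r'+1+1) i - xs (r'+1) i‖^2 := by positivity
    nlinarith [hgap, hstrong, htight, mul_nonneg hco hc0]
  have hX : f (xs (r'+1+1)) (ys (r'+1)) + ∑ i, h i (xs (r'+1+1) i)
      - (f (xs (r'+1)) (ys (r'+1)) + ∑ i, h i (xs (r'+1) i))
      ≤ -(βs (r'+1) / 2 + μmin) * ‖xs (r'+1+1) - xs (r'+1)‖^2 := by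
    have hsum := Finset.sum_le_sum (fun i (_ : i ∈ Finset.univ) => hblock i)
    have htel : ∑ i : Fin K,
        (f (hibsaV xs (r'+1) ((i:ℕ)+1)) (ys (r'+1)) - f (hibsaV xs (r'+1) (i:ℕ)) (ys (r'+1)))
        = f (xs (r'+1+1)) (ys (r'+1)) - f (xs (r'+1)) (ys (r'+1)) := by
      rw [Fin.sum_univ_eq_sum_range
        (fun k => f (hibsaV xs (r'+1) (k+1)) (ys (r'+1)) - f (hibsaV xs (r'+1) k) (ys (r'+1))) K]
      rw [Finset.sum_range_sub (fun k => f (hibsaV xs (r'+1) k) (ys (r'+1)))]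
      rw [hV0, hVK]
    have h1 : ∑ i : Fin K, (f (hibsaV xs (r'+1) ((i:ℕ)+1)) (ys (r'+1)) + h i (xs (r'+1+1) i)
          - f (hibsaV xs (r'+1) (i:ℕ)) (ys (r'+1)) - h i (xs (r'+1) i))
        = (∑ i : Fin K, (f (hibsaV xs (r'+1) ((i:ℕ)+1)) (ys (r'+1))
            - f (hibsaV xs (r'+1) (i:ℕ)) (ys (r'+1))))
          + ((∑ i, h i (xs (r'+1+1) i)) - ∑ i, h i (xs (r'+1) i)) := by
      rw [← Finset.sum_sub_distrib, ← Finset.sum_add_distrib]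
      exact Finset.sum_congr rfl fun i _ => by ring
    rw [h1, htel] at hsum
    have h2 : -(βs (r'+1)/2 + μmin) * ‖xs (r'+1+1) - xs (r'+1)‖^2
        = ∑ i : Fin K, -(βs (r'+1)/2 + μmin) * ‖xs (r'+1+1) i - xs (r'+1) i‖^2 := by
      rw [hsplit, Finset.mul_sum]
    rw [show -(βs (r'+1) / 2 + μmin) * ‖xs (r'+1+1) - xs (r'+1)‖^2
      = ∑ i : Fin K, -(βs (r'+1)/2 + μmin) * ‖xs (r'+1+1) i - xs (r'+1) i‖^2 from h2]
    linarith [hsum]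
  -- ============ y-part ============
  have hY : f (xs (r'+1+1)) (ys (r'+1+1)) - g (ys (r'+1+1))
      - (f (xs (r'+1+1)) (ys (r'+1)) - g (ys (r'+1)))
      ≤ 1/(2*ρ) * ‖ys (r'+1) - ys r'‖^2
        + ρ*Ly^2/2 * ‖xs (r'+1+1) - xs (r'+1)‖^2
        - (γ r'/2 - 1/ρ) * ‖ys (r'+1+1) - ys (r'+1)‖^2
        + γ r'/2 * (‖ys (r'+1+1)‖^2 - ‖ys (r'+1)‖^2) := by
    have hconc := hC2 (xs (r'+1+1)) (ys (r'+1+1)) (ys (r'+1)) (hxmem (r'+1+1)) hyR hyR1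
    have hVI := vi_lemma (fun v => f (xs (r'+1)) v) (Gfy (xs (r'+1)) (ys (r'+1))) g hgconv
      Y hYconv ρ (γ r') hρ (ys r') (ys (r'+1)) (ys (r'+1+1)) hyR hyR1
      (hGfy (xs (r'+1)) (ys (r'+1))) (fun v hv => (hyup r').2 v hv)
    have hsubi : ⟪Gfy (xs (r'+1+1)) (ys (r'+1)), ys (r'+1+1) - ys (r'+1)⟫
        = ⟪Gfy (xs (r'+1+1)) (ys (r'+1)) - Gfy (xs (r'+1)) (ys (r'+1)), ys (r'+1+1) - ys (r'+1)⟫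
          + ⟪Gfy (xs (r'+1)) (ys (r'+1)), ys (r'+1+1) - ys (r'+1)⟫ := by
      rw [inner_sub_left]
      ring
    have hlip : ‖Gfy (xs (r'+1+1)) (ys (r'+1)) - Gfy (xs (r'+1)) (ys (r'+1))‖
        ≤ Ly * ‖xs (r'+1+1) - xs (r'+1)‖ := by
      have hl := hLy (xs (r'+1)) (xs (r'+1+1)) (ys (r'+1)) (ys (r'+1))
        (hxmem (r'+1)) (hxmem (r'+1+1)) hyR hyR
      have h0 : ‖ys (r'+1) - ys (r'+1)‖^2 = 0 := by simp
      rwa [h0, add_zero, Real.sqrt_sq (norm_nonneg _)] at hl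
    have hcs1 : ⟪Gfy (xs (r'+1+1)) (ys (r'+1)) - Gfy (xs (r'+1)) (ys (r'+1)),
          ys (r'+1+1) - ys (r'+1)⟫
        ≤ (Ly * ‖xs (r'+1+1) - xs (r'+1)‖) * ‖ys (r'+1+1) - ys (r'+1)‖ :=
      le_trans (real_inner_le_norm _ _) (mul_le_mul_of_nonneg_right hlip (norm_nonneg _))
    have hyoung1 : (Ly * ‖xs (r'+1+1) - xs (r'+1)‖) * ‖ys (r'+1+1) - ys (r'+1)‖
        ≤ ρ*Ly^2/2 * ‖xs (r'+1+1) - xs (r'+1)‖^2 + 1/(2*ρ) * ‖ys (r'+1+1) - ys (r'+1)‖^2 := by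
      have hyg := aux_young (a := Ly * ‖xs (r'+1+1) - xs (r'+1)‖)
        (b := ‖ys (r'+1+1) - ys (r'+1)‖) hρ
      calc (Ly * ‖xs (r'+1+1) - xs (r'+1)‖) * ‖ys (r'+1+1) - ys (r'+1)‖
          ≤ ρ/2 * (Ly * ‖xs (r'+1+1) - xs (r'+1)‖)^2
            + 1/(2*ρ) * ‖ys (r'+1+1) - ys (r'+1)‖^2 := hyg
        _ = ρ*Ly^2/2 * ‖xs (r'+1+1) - xs (r'+1)‖^2
            + 1/(2*ρ) * ‖ys (r'+1+1) - ys (r'+1)‖^2 := by ring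
    have hcs2 : 1/ρ * ⟪ys (r'+1) - ys r', ys (r'+1+1) - ys (r'+1)⟫
        ≤ 1/(2*ρ) * ‖ys (r'+1) - ys r'‖^2 + 1/(2*ρ) * ‖ys (r'+1+1) - ys (r'+1)‖^2 :=
      aux_young' hρ (real_inner_le_norm _ _)
    have hpolar : 2 * ⟪ys (r'+1), ys (r'+1+1) - ys (r'+1)⟫
        = ‖ys (r'+1+1)‖^2 - ‖ys (r'+1)‖^2 - ‖ys (r'+1+1) - ys (r'+1)‖^2 :=
      inner_diff_identity _ _
    have hpolar' : γ r' * ⟪ys (r'+1), ys (r'+1+1) - ys (r'+1)⟫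
        = γ r'/2 * (‖ys (r'+1+1)‖^2 - ‖ys (r'+1)‖^2 - ‖ys (r'+1+1) - ys (r'+1)‖^2) := by
      linear_combination (γ r'/2) * hpolar
    rw [show (1:ℝ)/(2*ρ) = (1/ρ)/2 by ring] at hcs2 hyoung1 ⊢
    linarith [hconc, hsubi, hcs1, hyoung1, hcs2, hVI, hpolar']
  linarith [hX, hY]
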